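/- Let d ≥ 1 and let x_1, …, x_B be finitely many vectors in ℝ^d such that the zero vector 0 lies in the interior of the convex hull of {x_1, …, x_B}. Then the function f(θ) = Σ_{b=1}^{B} exp⟨θ, x_b⟩ attains a global minimum on ℝ^d; equivalently, the estimated log-likelihood θ ↦ −log(Σ_{b=1}^{B} exp⟨θ, x_b⟩) attains a global maximum, so the approximate MLE exists. -/

import Mathlib

set_option maxHeartbeats 1000000


/-- Existence of the approximate MLE: if `0` lies in the interior of the convex hull
of the change statistics `x 1, …, x B ⊆ ℝ^d`, then `f(θ) = Σ_b exp⟨θ, x b⟩` attains a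
global minimum, equivalently the estimated log-likelihood `θ ↦ −log f(θ)` attains a
global maximum. -/
theorem approximate_MLE_exists (d B : ℕ) (hd : 1 ≤ d)
    (x : Fin B → EuclideanSpace ℝ (Fin d))
    (h0 : (0 : EuclideanSpace ℝ (Fin d)) ∈
      interior (convexHull ℝ (Set.range x))) :
    (∃ θmin : EuclideanSpace ℝ (Fin d), ∀ θ : EuclideanSpace ℝ (Fin d),
        (∑ b : Fin B, Real.exp (inner ℝ θmin (x b))) ≤
          ∑ b : Fin B, Real.exp (inner ℝ θ (x b))) ∧
      ∃ θmax : EuclideanSpace ℝ (Fin d), ∀ θ : EuclideanSpace ℝ (Fin d),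
        -Real.log (∑ b : Fin B, Real.exp (inner ℝ θ (x b))) ≤
          -Real.log (∑ b : Fin B, Real.exp (inner ℝ θmax (x b))) := by
  classical
  set f : EuclideanSpace ℝ (Fin d) → ℝ :=
    fun θ => ∑ b : Fin B, Real.exp (inner ℝ θ (x b) : ℝ) with hf
  have hB : Nonempty (Fin B) := by
    by_contra h
    rw [not_nonempty_iff] at h
    rw [Set.range_eq_empty x, convexHull_empty, interior_empty] at h0
    exact h0
  have hfpos : ∀ θ, 0 < f θ :=
    fun θ => Finset.sum_pos (fun b _ => Real.exp_pos _) Finset.univ_nonempty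
  have hcont : Continuous f := by
    apply continuous_finset_sum
    intro b _
    exact (continuous_id.inner continuous_const).rexp
  obtain ⟨ε, hε, hball⟩ := Metric.mem_nhds_iff.mp (mem_interior_iff_mem_nhds.mp h0)
  -- coercivity
  have key : ∀ θ : EuclideanSpace ℝ (Fin d), Real.exp (ε / 2 * ‖θ‖) ≤ f θ := by
    intro θ
    obtain ⟨b, hb⟩ : ∃ b : Fin B, ∀ c : Fin B,
        (inner ℝ θ (x c) : ℝ) ≤ (inner ℝ θ (x b) : ℝ) := Finite.exists_max _
    have hhull : convexHull ℝ (Set.range x) ⊆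
        {y : EuclideanSpace ℝ (Fin d) | (inner ℝ θ y : ℝ) ≤ inner ℝ θ (x b)} := by
      apply convexHull_min
      · rintro y ⟨c, rfl⟩
        exact hb c
      · exact convex_halfSpace_le (innerSL ℝ θ).toLinearMap.isLinear _
    have hle : ε / 2 * ‖θ‖ ≤ (inner ℝ θ (x b) : ℝ) := by
      rcases eq_or_ne θ 0 with rfl | hθ
      · have h0' : (0 : EuclideanSpace ℝ (Fin d)) ∈ convexHull ℝ (Set.range x) :=
          hball (Metric.mem_ball_self hε)
        have h1 := hhull h0'
        simp only [Set.mem_setOf_eq, inner_zero_right] at h1 ⊢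
        simpa using h1
      · set u : EuclideanSpace ℝ (Fin d) := (ε / 2 / ‖θ‖) • θ with hu
        have hθn : (0:ℝ) < ‖θ‖ := norm_pos_iff.mpr hθ
        have hun : ‖u‖ = ε / 2 := by
          rw [hu, norm_smul, Real.norm_eq_abs, abs_of_pos (by positivity)]
          field_simp
        have humem : u ∈ Metric.ball (0 : EuclideanSpace ℝ (Fin d)) ε := by
          simp only [Metric.mem_ball, dist_zero_right, hun]
          linarith
        have h1 := hhull (hball humem)
        simp only [Set.mem_setOf_eq] at h1
        have hiu : (inner ℝ θ u : ℝ) = ε / 2 * ‖θ‖ := by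
          rw [hu, real_inner_smul_right, real_inner_self_eq_norm_sq]
          field_simp
        rw [hiu] at h1
        exact h1
    calc Real.exp (ε / 2 * ‖θ‖) ≤ Real.exp (inner ℝ θ (x b) : ℝ) := Real.exp_le_exp.mpr hle
      _ ≤ f θ := Finset.single_le_sum (f := fun c => Real.exp (inner ℝ θ (x c) : ℝ))
          (fun c _ => (Real.exp_pos _).le) (Finset.mem_univ b)
  -- choose radius
  set R : ℝ := max 0 ((2 / ε) * (Real.log (f 0) + 1)) with hR
  have hR0 : (0:ℝ) ≤ R := le_max_left _ _
  obtain ⟨θmin, hθmem, hθmin⟩ :=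
    (isCompact_closedBall (0 : EuclideanSpace ℝ (Fin d)) R).exists_isMinOn
      ⟨0, Metric.mem_closedBall_self hR0⟩ hcont.continuousOn
  have hmin : ∀ θ : EuclideanSpace ℝ (Fin d), f θmin ≤ f θ := by
    intro θ
    by_cases hθ : θ ∈ Metric.closedBall (0 : EuclideanSpace ℝ (Fin d)) R
    · exact hθmin hθ
    · have hθR : R < ‖θ‖ := by
        simpa [Metric.mem_closedBall, dist_zero_right, not_le] using hθ
      have h1 : Real.log (f 0) + 1 ≤ ε / 2 * ‖θ‖ := by
        have h2 : (2 / ε) * (Real.log (f 0) + 1) ≤ R := le_max_right _ _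
        have h3 := h2.trans hθR.le
        calc Real.log (f 0) + 1 = ε / 2 * ((2 / ε) * (Real.log (f 0) + 1)) := by
              field_simp
          _ ≤ ε / 2 * ‖θ‖ := mul_le_mul_of_nonneg_left h3 (by positivity)
      have h4 : f 0 < Real.exp (ε / 2 * ‖θ‖) := by
        rw [← Real.exp_log (hfpos 0)]
        exact Real.exp_lt_exp.mpr (by linarith)
      exact (hθmin (Metric.mem_closedBall_self hR0)).trans (h4.le.trans (key θ))
  refine ⟨⟨θmin, hmin⟩, θmin, fun θ => ?_⟩
  have := Real.log_le_log (hfpos θmin) (hmin θ)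
  linarith
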